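/- Consider variables (X, ε, X̂, S', ε', Ŝ'), where X = (X_1, …, X_n) are clean current-step variables, ε = (ε_1, …, ε_n) and ε' = (ε'_1, …, ε'_{n_s}) are noise variables, X̂ = (X̂_1, …, X̂_n) are observed current-step variables, S' = (S'_1, …, S'_{n_s}) are clean next-step variables, and Ŝ' = (Ŝ'_1, …, Ŝ'_{n_s}) are observed next-step variables. Let G⁺ be a directed acyclic graph on these variables in which: the vertices X form an arbitrary DAG among themselves; each S'_j has a parent set Pa(S'_j) ⊆ X and its only child is Ŝ'_j; each ε_i is a root whose only child is X̂_i, and each ε'_j is a root whose only child is Ŝ'_j; each X̂_i has exactly the parents {X_i, ε_i} and no children; and each Ŝ'_j has exactly the parents {S'_j, ε'_j} and no children. If the joint distribution of all these variables is faithful to G⁺, then for every i and j with X_i ∈ Pa(S'_j), the conditional independence X̂_i ⊥ Ŝ'_j | ({X̂_1, …, X̂_n} \ {X̂_i}) fails. -/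

import Mathlib

open Finset

noncomputable section

/-- Marginal probability that a configuration agrees with `x` on the coordinates in `E`. -/
def marg {V : Type*} [Fintype V] [DecidableEq V] {val : V → Type*}
    [∀ v, Fintype (val v)] [∀ v, DecidableEq (val v)]
    (p : (∀ v, val v) → ℝ) (E : Finset V) (x : ∀ v, val v) : ℝ :=
  ∑ y : ∀ v, val v, if ∀ v ∈ E, y v = x v then p y else 0

/-- Conditional independence X ⊥ Y | Z, in cross-multiplied form. -/
def CondIndep {V : Type*} [Fintype V] [DecidableEq V] {val : V → Type*}
    [∀ v, Fintype (val v)] [∀ v, DecidableEq (val v)]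
    (p : (∀ v, val v) → ℝ) (X Y Z : Finset V) : Prop :=
  ∀ x : ∀ v, val v,
    marg p (X ∪ Y ∪ Z) x * marg p Z x = marg p (X ∪ Z) x * marg p (Y ∪ Z) x

/-- An undirected path in a directed graph: consecutive vertices joined by an edge
in either direction, with no repeated vertex. -/
def IsUndirPath {V : Type*} (E : V → V → Prop) (l : List V) : Prop :=
  l.Chain' (fun a b => E a b ∨ E b a) ∧ l.Nodup

/-- A path is blocked by `Z`: it contains a chain or fork whose middle vertex is in `Z`,
or a collider such that neither the middle vertex nor any of its descendants is in `Z`. -/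
def BlockedPath {V : Type*} (E : V → V → Prop) (Z : Set V) (l : List V) : Prop :=
  ∃ (l₁ l₂ : List V) (a b c : V), l = l₁ ++ a :: b :: c :: l₂ ∧
    ((((E a b ∧ E b c) ∨ (E c b ∧ E b a) ∨ (E b a ∧ E b c)) ∧ b ∈ Z) ∨
     ((E a b ∧ E c b) ∧ b ∉ Z ∧ ∀ d, Relation.TransGen E b d → d ∉ Z))

/-- `X` and `Y` are d-separated by `Z`. -/
def DSeparated {V : Type*} (E : V → V → Prop) (X Y Z : Set V) : Prop :=
  ∀ l : List V, IsUndirPath E l →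
    (∃ u ∈ X, l.head? = some u) → (∃ w ∈ Y, l.getLast? = some w) →
    BlockedPath E Z l

/-- The graph is acyclic. -/
def Acyclic {V : Type*} (E : V → V → Prop) : Prop :=
  ∀ v, ¬ Relation.TransGen E v v

/-- `p` is faithful to the DAG: every conditional independence between disjoint sets
of variables is a d-separation. -/
def FaithfulTo {V : Type*} [Fintype V] [DecidableEq V] {val : V → Type*}
    [∀ v, Fintype (val v)] [∀ v, DecidableEq (val v)]
    (p : (∀ v, val v) → ℝ) (E : V → V → Prop) : Prop :=
  ∀ X Y Z : Finset V, Disjoint X Y → Disjoint X Z → Disjoint Y Z →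
    CondIndep p X Y Z → DSeparated E ↑X ↑Y ↑Z

/-- The variables of the noisy-observation model: clean current variables `x`, current
noise `eps`, observed current variables `xh`, clean next-step variables `s`, next-step
noise `eps'`, and observed next-step variables `sh`. -/
inductive NoisyVar (n ns : ℕ) where
  | x (i : Fin n)
  | eps (i : Fin n)
  | xh (i : Fin n)
  | s (j : Fin ns)
  | eps' (j : Fin ns)
  | sh (j : Fin ns)
  deriving DecidableEq, Fintype

/-- Value types of the variables of the noisy-observation model. -/
def nval {n ns : ℕ} (Xv Ev Ov : Fin n → Type) (Sv E'v O'v : Fin ns → Type) :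
    NoisyVar n ns → Type
  | .x i => Xv i
  | .eps i => Ev i
  | .xh i => Ov i
  | .s j => Sv j
  | .eps' j => E'v j
  | .sh j => O'v j

instance {n ns : ℕ} (Xv Ev Ov : Fin n → Type) (Sv E'v O'v : Fin ns → Type)
    [∀ i, Fintype (Xv i)] [∀ i, Fintype (Ev i)] [∀ i, Fintype (Ov i)]
    [∀ j, Fintype (Sv j)] [∀ j, Fintype (E'v j)] [∀ j, Fintype (O'v j)] :
    ∀ v, Fintype (nval Xv Ev Ov Sv E'v O'v v)
  | .x i => inferInstanceAs (Fintype (Xv i))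
  | .eps i => inferInstanceAs (Fintype (Ev i))
  | .xh i => inferInstanceAs (Fintype (Ov i))
  | .s j => inferInstanceAs (Fintype (Sv j))
  | .eps' j => inferInstanceAs (Fintype (E'v j))
  | .sh j => inferInstanceAs (Fintype (O'v j))

instance {n ns : ℕ} (Xv Ev Ov : Fin n → Type) (Sv E'v O'v : Fin ns → Type)
    [∀ i, DecidableEq (Xv i)] [∀ i, DecidableEq (Ev i)] [∀ i, DecidableEq (Ov i)]
    [∀ j, DecidableEq (Sv j)] [∀ j, DecidableEq (E'v j)] [∀ j, DecidableEq (O'v j)] :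
    ∀ v, DecidableEq (nval Xv Ev Ov Sv E'v O'v v)
  | .x i => inferInstanceAs (DecidableEq (Xv i))
  | .eps i => inferInstanceAs (DecidableEq (Ev i))
  | .xh i => inferInstanceAs (DecidableEq (Ov i))
  | .s j => inferInstanceAs (DecidableEq (Sv j))
  | .eps' j => inferInstanceAs (DecidableEq (E'v j))
  | .sh j => inferInstanceAs (DecidableEq (O'v j))

/-- In the augmented DAG of the noisy-observation model, if the joint
distribution is faithful to the graph, then for every clean edge Xᵢ → S'ⱼ the conditional
independence X̂ᵢ ⊥ Ŝ'ⱼ | (X̂ \ {X̂ᵢ}) fails. -/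
theorem noisy_faithful_dag_detects_parents
    (n ns : ℕ) (Xv Ev Ov : Fin n → Type) (Sv E'v O'v : Fin ns → Type)
    [∀ i, Fintype (Xv i)] [∀ i, DecidableEq (Xv i)] [∀ i, Nonempty (Xv i)]
    [∀ i, Fintype (Ev i)] [∀ i, DecidableEq (Ev i)] [∀ i, Nonempty (Ev i)]
    [∀ i, Fintype (Ov i)] [∀ i, DecidableEq (Ov i)] [∀ i, Nonempty (Ov i)]
    [∀ j, Fintype (Sv j)] [∀ j, DecidableEq (Sv j)] [∀ j, Nonempty (Sv j)]
    [∀ j, Fintype (E'v j)] [∀ j, DecidableEq (E'v j)] [∀ j, Nonempty (E'v j)]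
    [∀ j, Fintype (O'v j)] [∀ j, DecidableEq (O'v j)] [∀ j, Nonempty (O'v j)]
    (E : NoisyVar n ns → NoisyVar n ns → Prop)
    (Pa : Fin ns → Finset (Fin n))
    (hacyc : Acyclic E)
    -- the parents of each clean next-step variable S'ⱼ are the Pa(S'ⱼ) ⊆ X …
    (hSparents : ∀ (j : Fin ns) (u : NoisyVar n ns),
      E u (.s j) ↔ ∃ i ∈ Pa j, u = .x i)
    -- … and its only child is Ŝ'ⱼ
    (hSchild : ∀ (j : Fin ns) (v : NoisyVar n ns), E (.s j) v ↔ v = .sh j)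
    -- each εᵢ is a root whose only child is X̂ᵢ
    (hEpsRoot : ∀ (i : Fin n) (u : NoisyVar n ns), ¬ E u (.eps i))
    (hEpsChild : ∀ (i : Fin n) (v : NoisyVar n ns), E (.eps i) v ↔ v = .xh i)
    -- each ε'ⱼ is a root whose only child is Ŝ'ⱼ
    (hEps'Root : ∀ (j : Fin ns) (u : NoisyVar n ns), ¬ E u (.eps' j))
    (hEps'Child : ∀ (j : Fin ns) (v : NoisyVar n ns), E (.eps' j) v ↔ v = .sh j)
    -- each X̂ᵢ has exactly the parents {Xᵢ, εᵢ} and no children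
    (hXhParents : ∀ (i : Fin n) (u : NoisyVar n ns),
      E u (.xh i) ↔ (u = .x i ∨ u = .eps i))
    (hXhChild : ∀ (i : Fin n) (v : NoisyVar n ns), ¬ E (.xh i) v)
    -- each Ŝ'ⱼ has exactly the parents {S'ⱼ, ε'ⱼ} and no children
    (hShParents : ∀ (j : Fin ns) (u : NoisyVar n ns),
      E u (.sh j) ↔ (u = .s j ∨ u = .eps' j))
    (hShChild : ∀ (j : Fin ns) (v : NoisyVar n ns), ¬ E (.sh j) v)
    -- the clean current variables form a DAG among themselves
    (hXparents : ∀ (i : Fin n) (u : NoisyVar n ns), E u (.x i) → ∃ i', u = .x i')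
    -- joint distribution of all the variables, faithful to the graph
    (p : (∀ v, nval Xv Ev Ov Sv E'v O'v v) → ℝ)
    (hp0 : ∀ z, 0 ≤ p z) (hpsum : ∑ z, p z = 1)
    (hfaith : FaithfulTo p E) :
    ∀ (i : Fin n) (j : Fin ns), i ∈ Pa j →
      ¬ CondIndep p {NoisyVar.xh i} {NoisyVar.sh j}
        ((Finset.univ.image (NoisyVar.xh : Fin n → NoisyVar n ns)) \ {NoisyVar.xh i}) := by

  intro i j hij hCI
  have hd := hfaith {NoisyVar.xh i} {NoisyVar.sh j}
      ((Finset.univ.image (NoisyVar.xh : Fin n → NoisyVar n ns)) \ {NoisyVar.xh i})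
      (by simp) (by simp) (by simp) hCI
  set l : List (NoisyVar n ns) := [.xh i, .x i, .s j, .sh j] with hl
  have e1 : E (.x i) (.xh i) := (hXhParents i _).mpr (Or.inl rfl)
  have e2 : E (.x i) (.s j) := (hSparents j _).mpr ⟨i, hij, rfl⟩
  have e3 : E (.s j) (.sh j) := (hSchild j _).mpr rfl
  have hpath : IsUndirPath E l := by
    constructor
    · simp only [hl, List.isChain_cons_cons, List.isChain_singleton, and_true]
      exact List.isChain_cons_cons.mpr ⟨Or.inr e1, List.isChain_cons_cons.mpr ⟨Or.inl e2, List.isChain_pair.mpr (Or.inl e3)⟩⟩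
    · simp [hl]
  have hb := hd l hpath ⟨.xh i, by simp, by simp [hl]⟩ ⟨.sh j, by simp, by simp [hl]⟩
  obtain ⟨l₁, l₂, a, b, c, heq, hblock⟩ := hb
  have hZx : (NoisyVar.x i : NoisyVar n ns) ∉
      (↑((Finset.univ.image (NoisyVar.xh : Fin n → NoisyVar n ns)) \ {NoisyVar.xh i}) :
        Set (NoisyVar n ns)) := by simp
  have hZs : (NoisyVar.s j : NoisyVar n ns) ∉
      (↑((Finset.univ.image (NoisyVar.xh : Fin n → NoisyVar n ns)) \ {NoisyVar.xh i}) :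
        Set (NoisyVar n ns)) := by simp
  match l₁, heq with
  | [], heq =>
    simp only [hl, List.nil_append, List.cons.injEq] at heq
    obtain ⟨ha, hbb, hc, _⟩ := heq
    subst ha; subst hbb; subst hc
    rcases hblock with ⟨h, hmem⟩ | ⟨⟨hab, _⟩, _⟩
    · exact hZx hmem
    · exact hXhChild i _ hab
  | [u], heq =>
    simp only [hl, List.cons_append, List.nil_append, List.cons.injEq] at heq
    obtain ⟨_, ha, hbb, hc, _⟩ := heq
    subst ha; subst hbb; subst hc
    rcases hblock with ⟨h, hmem⟩ | ⟨⟨_, hcb⟩, _⟩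
    · exact hZs hmem
    · exact hShChild j _ hcb
  | u :: v :: l₁', heq =>
    exfalso
    have := congrArg List.length heq
    simp [hl] at this
    omega
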